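/- Let A and B be finite types and let a₀, a₁ : A → B → B → ℂ satisfy the pointwise identity a₀ i j l * conj (a₀ i q r) = a₁ i j l * conj (a₁ i q r) for all i : A and j, l, q, r : B. Then there exists a function s : A → ℂ such that s i * a₀ i j l = a₁ i j l for all i : A and j, l : B. Consequently the diagonal matrix S with entries S i i = s i satisfies (S ⊗ I).mulVec ψ₀(φ) = ψ₁(φ) for every φ : B → ℂ, where ψ_b(φ) (i, j) = ∑_{l : B} a_b i j l * φ l. -/

import Mathlib

open scoped ComplexOrder
open Matrix

noncomputable section

/-- Partial trace over `A` of the outer product `|ψ⟩⟨ψ|`: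
`(ptrA ψ) j q = ∑ i, ψ (i, j) * conj (ψ (i, q))`. -/
def ptrA {A B : Type*} [Fintype A] (ψ : A × B → ℂ) : Matrix B B ℂ :=
  fun j q => ∑ i : A, ψ (i, j) * (starRingEnd ℂ) (ψ (i, q))

/-- The Kronecker product `S ⊗ I` with the identity on `B`, as a matrix on `A × B`. -/
def kronId {A B : Type*} [DecidableEq B] (S : Matrix A A ℂ) : Matrix (A × B) (A × B) ℂ :=
  Matrix.kroneckerMap (· * ·) S (1 : Matrix B B ℂ)

/-- `ptrA ψ` is a Gram matrix, hence positive semidefinite. -/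
lemma ptrA_posSemidef {A B : Type*} [Fintype A] [Fintype B] (ψ : A × B → ℂ) :
    (ptrA ψ).PosSemidef := by
  set V : Matrix A B ℂ := Matrix.of fun i j => (starRingEnd ℂ) (ψ (i, j)) with hV
  have h := Matrix.posSemidef_conjTranspose_mul_self V
  have heq : ptrA ψ = Vᴴ * V := by
    ext j q
    simp [Matrix.mul_apply, Matrix.conjTranspose_apply, ptrA, hV, mul_comm]
  rw [heq]; exact h

namespace Matrix.PosSemidef

/-- The square root of a positive semidefinite matrix, as defined in the older Mathlib
(removed upstream). -/
def sqrt {n : Type*} [Fintype n] [DecidableEq n] {A : Matrix n n ℂ} (hA : A.PosSemidef) :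
    Matrix n n ℂ :=
  hA.1.eigenvectorUnitary.1 * diagonal ((↑) ∘ (√·) ∘ hA.1.eigenvalues) *
    (star hA.1.eigenvectorUnitary : Matrix n n ℂ)

lemma posSemidef_sqrt {n : Type*} [Fintype n] [DecidableEq n] {A : Matrix n n ℂ}
    (hA : A.PosSemidef) : hA.sqrt.PosSemidef := by
  have hd : (diagonal ((↑) ∘ (√·) ∘ hA.1.eigenvalues) : Matrix n n ℂ).PosSemidef :=
    posSemidef_diagonal_iff.mpr fun i => by
      simp only [Function.comp_apply]
      exact_mod_cast Real.sqrt_nonneg _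
  have h := hd.mul_mul_conjTranspose_same (hA.1.eigenvectorUnitary.1)
  unfold sqrt
  convert h using 2
  simp [Matrix.star_eq_conjTranspose]

end Matrix.PosSemidef

lemma sqrt_mul_mul_sqrt_posSemidef {B : Type*} [Fintype B] [DecidableEq B]
    {ρ σ : Matrix B B ℂ} (hρ : ρ.PosSemidef) (hσ : σ.PosSemidef) :
    (hρ.sqrt * σ * hρ.sqrt).PosSemidef := by
  have h := hσ.mul_mul_conjTranspose_same hρ.sqrt
  rwa [hρ.posSemidef_sqrt.isHermitian.eq] at h

/-- The fidelity `F(ρ, σ) = tr √(√ρ * σ * √ρ)` of two positive semidefinite matrices. -/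
def fidelity {B : Type*} [Fintype B] [DecidableEq B] {ρ σ : Matrix B B ℂ}
    (hρ : ρ.PosSemidef) (hσ : σ.PosSemidef) : ℝ :=
  ((sqrt_mul_mul_sqrt_posSemidef hρ hσ).sqrt.trace).re

/-- From the pointwise coefficient identity one obtains a function `s` with
`s i * a₀ i j l = a₁ i j l`, and the diagonal matrix `S = diagonal s` maps the
commitment of `0` to the commitment of `1` via `S ⊗ I`. -/
theorem exists_diag_transform_of_pointwise_identity
    {A B : Type*} [Fintype A] [Fintype B] [DecidableEq A] [DecidableEq B]
    (a₀ a₁ : A → B → B → ℂ)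
    (h : ∀ (i : A) (j l q r : B),
      a₀ i j l * (starRingEnd ℂ) (a₀ i q r) = a₁ i j l * (starRingEnd ℂ) (a₁ i q r)) :
    ∃ s : A → ℂ,
      (∀ (i : A) (j l : B), s i * a₀ i j l = a₁ i j l) ∧
      (∀ φ : B → ℂ,
        (kronId (Matrix.diagonal s)).mulVec (fun p => ∑ l : B, a₀ p.1 p.2 l * φ l) =
        (fun p => ∑ l : B, a₁ p.1 p.2 l * φ l)) := by
  classical
  set c := starRingEnd ℂ
  set s : A → ℂ := fun i => if hi : ∃ q r, a₁ i q r ≠ 0 then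
      c (a₀ i hi.choose hi.choose_spec.choose) / c (a₁ i hi.choose hi.choose_spec.choose)
    else 0 with hs_def
  have key : ∀ (i : A) (j l : B), s i * a₀ i j l = a₁ i j l := by
    intro i j l
    by_cases hi : ∃ q r, a₁ i q r ≠ 0
    · rw [hs_def]
      simp only [dif_pos hi]
      set q := hi.choose with hq
      set r := hi.choose_spec.choose with hr
      have hne : a₁ i q r ≠ 0 := hi.choose_spec.choose_spec
      have hcne : c (a₁ i q r) ≠ 0 := by simpa using hne
      rw [div_mul_eq_mul_div, div_eq_iff hcne]
      linear_combination h i j l q r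
    · rw [hs_def]
      simp only [dif_neg hi, zero_mul]
      push_neg at hi
      exact (hi j l).symm
  refine ⟨s, key, ?_⟩
  intro φ
  have hk : kronId (Matrix.diagonal s) = Matrix.diagonal (fun p : A × B => s p.1) := by
    ext ⟨x, y⟩ ⟨x', y'⟩
    simp only [kronId, Matrix.kroneckerMap_apply, Matrix.diagonal_apply, Matrix.one_apply,
      Prod.mk.injEq]
    split_ifs with h1 h2 h3 h3 <;> simp_all
  rw [hk]
  funext p
  rw [Matrix.mulVec_diagonal, Finset.mul_sum]
  exact Finset.sum_congr rfl fun l _ => by rw [← mul_assoc, key p.1 p.2 l]
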